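/- Let H be an edge-minimal counterexample to Conjecture C2, that is, H is a linear hypergraph with no rank-1 edges satisfying q_list(H) > D(H) + 1, while every linear hypergraph with no rank-1 edges and strictly fewer edges H' satisfies q_list(H') ≤ D(H') + 1. Then for every edge e, D(H ∖ {e}) = D(H). -/

import Mathlib

open Finset

variable {V : Type*} [DecidableEq V]

/-- A proper list edge coloring of the hypergraph with edge set `E` from the lists `L`:
each edge gets a color from its list, and two distinct edges get the same color
only if they are disjoint. -/
def IsProperListColoring (E : Finset (Finset V)) (L : Finset V → Finset ℕ)
    (γ : Finset V → ℕ) : Prop :=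
  (∀ e ∈ E, γ e ∈ L e) ∧ ∀ e ∈ E, ∀ f ∈ E, e ≠ f → γ e = γ f → Disjoint e f

/-- `E` is `k`-list-edge-colorable: for every assignment of lists of size `k`
there is a proper list edge coloring. -/
def ListColorable (E : Finset (Finset V)) (k : ℕ) : Prop :=
  ∀ L : Finset V → Finset ℕ, (∀ e ∈ E, (L e).card = k) →
    ∃ γ : Finset V → ℕ, IsProperListColoring E L γ

/-- The list edge chromatic number `q_list`: the least `k` such that `E` is
`k`-list-edge-colorable. -/
noncomputable def qList (E : Finset (Finset V)) : ℕ :=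
  sInf {k | ListColorable E k}

/-- The degree of a vertex: the number of edges containing it. -/
def deg (E : Finset (Finset V)) (x : V) : ℕ := (E.filter fun e => x ∈ e).card

/-- The clique rank of an edge: `R(e) = ∑_{x ∈ e} (d(x) - 1)`. -/
def cliqueRank (E : Finset (Finset V)) (e : Finset V) : ℕ :=
  ∑ x ∈ e, (deg E x - 1)

/-- The clique degree of a vertex: `D(x) = ∑_{e ∋ x} (r(e) - 1)`. -/
def cliqueDeg (E : Finset (Finset V)) (x : V) : ℕ :=
  ∑ e ∈ E.filter (fun e => x ∈ e), (e.card - 1)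

/-- A hypergraph is linear if any two distinct edges meet in at most one vertex. -/
def Linear (E : Finset (Finset V)) : Prop :=
  ∀ e ∈ E, ∀ f ∈ E, e ≠ f → (e ∩ f).card ≤ 1

/-- The number of triangles with side `e`: unordered pairs `{f, g}` of edges
distinct from `e` such that `e, f, g` pairwise intersect. -/
def numTriangles (E : Finset (Finset V)) (e : Finset V) : ℕ :=
  (((E.erase e).powersetCard 2).filter fun p =>
    (∀ f ∈ p, (e ∩ f).Nonempty) ∧ ∀ f ∈ p, ∀ g ∈ p, f ≠ g → (f ∩ g).Nonempty).card

/-- Greedy: if every list is at least as large as the number of edges,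
a proper list edge coloring exists. -/
lemma exists_coloring_of_card_le (E : Finset (Finset V)) (L : Finset V → Finset ℕ)
    (hL : ∀ f ∈ E, E.card ≤ (L f).card) :
    ∃ γ : Finset V → ℕ, IsProperListColoring E L γ := by
  classical
  induction E using Finset.cons_induction_on generalizing L with
  | empty =>
    exact ⟨fun _ => 0, fun e he => absurd he (Finset.notMem_empty e),
      fun e he => absurd he (Finset.notMem_empty e)⟩
  | cons a s ha ih =>
    obtain ⟨γ, hγmem, hγprop⟩ := ih L (fun f hf => le_trans
      (Nat.le_of_lt (by rw [Finset.card_cons]; omega))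
      (hL f (Finset.mem_cons_of_mem hf)))
    have hcard : (s.image γ).card < (L a).card := by
      calc (s.image γ).card ≤ s.card := Finset.card_image_le
        _ < (Finset.cons a s ha).card := by rw [Finset.card_cons]; omega
        _ ≤ (L a).card := hL a (Finset.mem_cons_self a s)
    have hne : (L a \ s.image γ).Nonempty := by
      rw [Finset.sdiff_nonempty]
      intro hsub
      exact absurd (Finset.card_le_card hsub) (not_le.mpr hcard)
    obtain ⟨c, hcmem⟩ := hne
    rw [Finset.mem_sdiff] at hcmem
    have hc : c ∈ L a ∧ c ∉ s.image γ := hcmem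
    refine ⟨fun f => if f = a then c else γ f, ?_, ?_⟩
    · intro f hf
      rcases Finset.mem_cons.mp hf with rfl | hf
      · simp [hc.1]
      · have : f ≠ a := fun h => ha (h ▸ hf)
        simpa [this] using hγmem f hf
    · intro f hf g hg hfg heq
      rcases Finset.mem_cons.mp hf with rfl | hf'
      · rcases Finset.mem_cons.mp hg with rfl | hg'
        · exact absurd rfl hfg
        · exfalso
          have hgne : g ≠ f := fun h => ha (h ▸ hg')
          dsimp only at heq
          rw [if_pos rfl, if_neg hgne] at heq
          exact hc.2 (by rw [heq]; exact Finset.mem_image_of_mem γ hg')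
      · rcases Finset.mem_cons.mp hg with rfl | hg'
        · exfalso
          have hfne : f ≠ g := fun h => ha (h ▸ hf')
          dsimp only at heq
          rw [if_pos rfl, if_neg hfne] at heq
          exact hc.2 (by rw [← heq]; exact Finset.mem_image_of_mem γ hf')
        · have hfne : f ≠ a := fun h => ha (h ▸ hf')
          have hgne : g ≠ a := fun h => ha (h ▸ hg')
          simp only [if_neg hfne, if_neg hgne] at heq
          exact hγprop f hf' g hg' hfg heq
    
/-- If `E` is `k`-list-colorable, then any lists of size at least `k` admit a coloring. -/
lemma exists_coloring_of_colorable {E : Finset (Finset V)} {k : ℕ}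
    (h : ListColorable E k) (L : Finset V → Finset ℕ)
    (hL : ∀ f ∈ E, k ≤ (L f).card) :
    ∃ γ : Finset V → ℕ, IsProperListColoring E L γ := by
  classical
  -- Trim each list to size exactly `k`.
  have htrim : ∀ f : Finset V, ∃ t : Finset ℕ, (k ≤ (L f).card → t ⊆ L f) ∧ t.card = k := by
    intro f
    by_cases hf : k ≤ (L f).card
    · obtain ⟨t, ht, htc⟩ := Finset.exists_subset_card_eq hf
      exact ⟨t, fun _ => ht, htc⟩
    · exact ⟨Finset.range k, fun h => absurd h hf, Finset.card_range k⟩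
  choose L' hL'sub hL'card using htrim
  obtain ⟨γ, hmem, hprop⟩ := h L' (fun f _ => hL'card f)
  exact ⟨γ, fun f hf => hL'sub f (hL f hf) (hmem f hf), hprop⟩

lemma listColorable_card (E : Finset (Finset V)) : ListColorable E E.card :=
  fun L hL => exists_coloring_of_card_le E L (fun f hf => (hL f hf).ge)

lemma qList_colorable (E : Finset (Finset V)) : ListColorable E (qList E) := by
  have hne : {k | ListColorable E k}.Nonempty := ⟨E.card, listColorable_card E⟩
  exact Nat.sInf_mem hne

lemma cliqueDeg_erase_le (E : Finset (Finset V)) (e : Finset V) (x : V) :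
    cliqueDeg (E.erase e) x ≤ cliqueDeg E x := by
  unfold cliqueDeg
  exact Finset.sum_le_sum_of_subset
    (Finset.filter_subset_filter _ (Finset.erase_subset e E))

/-- An edge-minimal counterexample `H` to Conjecture C2 satisfies
`D(H \ {e}) = D(H)` for every edge `e`. -/
theorem stmt15 {V : Type*} [DecidableEq V] [Fintype V] (E : Finset (Finset V))
    (hlin : Linear E) (h2 : ∀ e ∈ E, 2 ≤ e.card)
    (hcex : Finset.univ.sup (cliqueDeg E) + 1 < qList E)
    (hmin : ∀ E' : Finset (Finset V), Linear E' → (∀ e ∈ E', 2 ≤ e.card) →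
      E'.card < E.card → qList E' ≤ Finset.univ.sup (cliqueDeg E') + 1) :
    ∀ e ∈ E, Finset.univ.sup (cliqueDeg (E.erase e)) =
      Finset.univ.sup (cliqueDeg E) := by
  classical
  intro e he
  set D := Finset.univ.sup (cliqueDeg E) with hD
  set D' := Finset.univ.sup (cliqueDeg (E.erase e)) with hD'
  have hle : D' ≤ D :=
    Finset.sup_mono_fun (fun x _ => cliqueDeg_erase_le E e x)
  rcases hle.lt_or_eq with hlt | heq
  · -- derive a contradiction: E is (D+1)-list-colorable
    exfalso
    have hE'lin : Linear (E.erase e) := fun f hf g hg =>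
      hlin f (Finset.mem_of_mem_erase hf) g (Finset.mem_of_mem_erase hg)
    have hE'2 : ∀ f ∈ E.erase e, 2 ≤ f.card := fun f hf =>
      h2 f (Finset.mem_of_mem_erase hf)
    have hcardlt : (E.erase e).card < E.card := Finset.card_erase_lt_of_mem he
    have hq' : qList (E.erase e) ≤ D' + 1 := hmin _ hE'lin hE'2 hcardlt
    have hcol' : ListColorable (E.erase e) (qList (E.erase e)) :=
      qList_colorable (E.erase e)
    -- show E is (D+1)-list-colorable
    have hcol : ListColorable E (D + 1) := by
      intro L hLcard
      have hLe : (L e).Nonempty :=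
        Finset.card_pos.mp (by rw [hLcard e he]; omega)
      obtain ⟨c, hc⟩ := hLe
      -- remove c from lists of edges meeting e
      set S : Finset V → Finset ℕ :=
        fun f => if Disjoint e f then L f else (L f).erase c with hS
      have hSsub : ∀ f, S f ⊆ L f := by
        intro f
        by_cases hdf : Disjoint e f <;> simp [hS, hdf, Finset.erase_subset]
      have hScard : ∀ f ∈ E.erase e, qList (E.erase e) ≤ (S f).card := by
        intro f hf
        have hfE := Finset.mem_of_mem_erase hf
        have : D ≤ (S f).card := by
          by_cases hdf : Disjoint e f
          · simp only [hS, if_pos hdf]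
            rw [hLcard f hfE]; omega
          · simp only [hS, if_neg hdf]
            have := Finset.pred_card_le_card_erase (s := L f) (a := c)
            rw [hLcard f hfE] at this
            omega
        omega
      obtain ⟨γ, hγmem, hγprop⟩ := exists_coloring_of_colorable hcol' S hScard
      refine ⟨fun f => if f = e then c else γ f, ?_, ?_⟩
      · intro f hf
        by_cases hfe : f = e
        · simpa [hfe] using hc
        · have hf' : f ∈ E.erase e := Finset.mem_erase.mpr ⟨hfe, hf⟩
          simpa [hfe] using hSsub f (hγmem f hf')
      · intro f hf g hg hfg heqc
        by_cases hfe : f = e <;> by_cases hge : g = e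
        · exact absurd (hfe.trans hge.symm) hfg
        · -- f = e, g ≠ e
          subst hfe
          have hg' : g ∈ E.erase f := Finset.mem_erase.mpr ⟨hge, hg⟩
          simp only [if_pos rfl, if_neg hge] at heqc
          by_contra hnd
          have : γ g ∈ (L g).erase c := by
            have := hγmem g hg'
            simpa [hS, if_neg hnd] using this
          exact (Finset.ne_of_mem_erase this) heqc.symm
        · -- g = e, f ≠ e
          subst hge
          have hf' : f ∈ E.erase g := Finset.mem_erase.mpr ⟨hfe, hf⟩
          simp only [if_pos rfl, if_neg hfe] at heqc
          by_contra hnd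
          have hnd' : ¬ Disjoint g f := fun h => hnd h.symm
          have : γ f ∈ (L f).erase c := by
            have := hγmem f hf'
            simpa [hS, if_neg hnd'] using this
          exact (Finset.ne_of_mem_erase this) heqc
        · have hf' : f ∈ E.erase e := Finset.mem_erase.mpr ⟨hfe, hf⟩
          have hg' : g ∈ E.erase e := Finset.mem_erase.mpr ⟨hge, hg⟩
          simp only [if_neg hfe, if_neg hge] at heqc
          exact hγprop f hf' g hg' hfg heqc
    have : qList E ≤ D + 1 := Nat.sInf_le hcol
    omega
  · exact heq
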